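/- If G is a connected block graph, then mdim(G) = |V(G)| − ζ(G), where ζ(G) is the number of cut vertices of G. -/

import Mathlib

open SimpleGraph

variable {V : Type*}

/-- Distance from a vertex `w` to an (unordered) edge `e`:
the minimum of the distances to the two endpoints. -/
noncomputable def edgeVertexDist (G : SimpleGraph V) (w : V) (e : Sym2 V) : ℕ :=
  Sym2.lift ⟨fun a b => min (G.dist a w) (G.dist b w), fun a b => by simp [min_comm]⟩ e

/-- Distance from a vertex `w` to a mixed element (vertex or edge). -/
noncomputable def mixedDist (G : SimpleGraph V) (w : V) : V ⊕ G.edgeSet → ℕ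
  | Sum.inl v => G.dist v w
  | Sum.inr e => edgeVertexDist G w e.val

/-- `W` is a mixed resolving set: every two distinct mixed elements are
distinguished by the distance to some vertex of `W`. -/
def IsMixedResolving (G : SimpleGraph V) (W : Set V) : Prop :=
  ∀ x y : V ⊕ G.edgeSet, x ≠ y → ∃ w ∈ W, mixedDist G w x ≠ mixedDist G w y

/-- The mixed metric dimension of a finite graph. -/
noncomputable def mdim [Fintype V] (G : SimpleGraph V) : ℕ :=
  sInf {n | ∃ W : Finset V, W.card = n ∧ IsMixedResolving G ↑W}

/-- `y` is a maximal neighbor of `x`: `y` is a neighbor of `x` adjacent to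
every neighbor of `x` other than `y` itself. -/
def IsMaxNeighbor (G : SimpleGraph V) (x y : V) : Prop :=
  G.Adj x y ∧ ∀ z, G.Adj x z → z ≠ y → G.Adj y z

/-- `v` is a cut vertex of `G`: deleting `v` disconnects the graph. -/
def IsCutVertex (G : SimpleGraph V) (v : V) : Prop :=
  ¬ (G.induce {w | w ≠ v}).Connected

/-- A set `s` induces a nonseparable (connected, without cut vertices)
subgraph of `G`. -/
def IsNonseparable (G : SimpleGraph V) (s : Set V) : Prop :=
  (G.induce s).Connected ∧ ∀ v ∈ s, s = {v} ∨ (G.induce (s \ {v})).Connected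

/-- `s` is (the vertex set of) a block of `G`: a maximal nonseparable
subgraph. -/
def IsBlock (G : SimpleGraph V) (s : Set V) : Prop :=
  IsNonseparable G s ∧ ∀ t : Set V, s ⊆ t → IsNonseparable G t → t = s

/-- `G` is a block graph: every block of `G` is complete. -/
def IsBlockGraph (G : SimpleGraph V) : Prop :=
  ∀ s : Set V, IsBlock G s → G.IsClique s

section Helpers
variable {G : SimpleGraph V}

variable {G : SimpleGraph V}

/-- inclusion hom from an induced subgraph -/
def inducedHom (G : SimpleGraph V) (s : Set V) : G.induce s →g G where
  toFun := Subtype.val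
  map_rel' := fun h => h

lemma reachable_induce_of_walk {s : Set V} {x y : V} (p : G.Walk x y)
    (hs : ∀ z ∈ p.support, z ∈ s) :
    (G.induce s).Reachable ⟨x, hs x p.start_mem_support⟩ ⟨y, hs y p.end_mem_support⟩ := by
  have h1 := p.connected_induce_support
  have h2 := h1.preconnected ⟨x, p.start_mem_support⟩ ⟨y, p.end_mem_support⟩
  exact h2.map (induceHomOfLE G hs).toHom

lemma dist_add_of_not_reachable (hG : G.Connected) {u y w : V} (hu : u ≠ w) (hy : y ≠ w)
    (h : ¬ (G.induce {x | x ≠ w}).Reachable ⟨u, hu⟩ ⟨y, hy⟩) :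
    G.dist u y = G.dist u w + G.dist w y := by
  classical
  refine le_antisymm hG.dist_triangle ?_
  obtain ⟨p, hp⟩ := hG.exists_walk_length_eq_dist u y
  by_cases hw : w ∈ p.support
  · have hlen := congrArg Walk.length (p.take_spec hw)
    rw [Walk.length_append] at hlen
    calc G.dist u w + G.dist w y
        ≤ (p.takeUntil w hw).length + (p.dropUntil w hw).length :=
          add_le_add (dist_le _) (dist_le _)
      _ = p.length := hlen
      _ = G.dist u y := hp
  · exact absurd (reachable_induce_of_walk p (fun z hz => show z ≠ w from fun hzw => hw (hzw ▸ hz))) h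

lemma exists_further_single (hG : G.Connected) {w : V} (hw : IsCutVertex G w) {u : V}
    (hu : u ≠ w) : ∃ y, y ≠ w ∧ G.dist u y = G.dist u w + G.dist w y := by
  have h : ∃ z : {x | x ≠ w}, ¬ (G.induce {x | x ≠ w}).Reachable ⟨u, hu⟩ z := by
    by_contra h
    push_neg at h
    exact hw ((connected_iff_exists_forall_reachable _).mpr ⟨⟨u, hu⟩, h⟩)
  obtain ⟨z, hz⟩ := h
  exact ⟨z.val, z.2, dist_add_of_not_reachable hG hu z.2 hz⟩

lemma exists_further_pair (hG : G.Connected) {w : V} (hw : IsCutVertex G w) {a b : V}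
    (hab : G.Adj a b) (ha : a ≠ w) (hb : b ≠ w) :
    ∃ y, y ≠ w ∧ G.dist a y = G.dist a w + G.dist w y ∧
      G.dist b y = G.dist b w + G.dist w y := by
  have h : ∃ z : {x | x ≠ w}, ¬ (G.induce {x | x ≠ w}).Reachable ⟨a, ha⟩ z := by
    by_contra h
    push_neg at h
    exact hw ((connected_iff_exists_forall_reachable _).mpr ⟨⟨a, ha⟩, h⟩)
  obtain ⟨z, hz⟩ := h
  have hadj : (G.induce {x | x ≠ w}).Adj ⟨a, ha⟩ ⟨b, hb⟩ := hab
  have hzb : ¬ (G.induce {x | x ≠ w}).Reachable ⟨b, hb⟩ z := fun hr => hz (hadj.reachable.trans hr)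
  exact ⟨z.val, z.2, dist_add_of_not_reachable hG ha z.2 hz,
    dist_add_of_not_reachable hG hb z.2 hzb⟩

lemma exists_noncut_behind [Fintype V] (hG : G.Connected) {u v : V} (huv : u ≠ v) :
    ∃ w, ¬ IsCutVertex G w ∧ G.dist u w = G.dist u v + G.dist v w := by
  classical
  set S : Set V := {w | G.dist u w = G.dist u v + G.dist v w} with hS
  have hvS : v ∈ S := by simp [hS, dist_self]
  obtain ⟨w, hwS, hmax⟩ := Set.Finite.exists_maximalFor (fun w => G.dist u w) S (Set.toFinite S) ⟨v, hvS⟩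
  refine ⟨w, fun hcut => ?_, hwS⟩
  have huw : u ≠ w := by
    rintro rfl
    have h0 : G.dist u u = 0 := dist_self
    have := hwS
    simp only [hS, Set.mem_setOf_eq] at this
    have : G.dist u v = 0 := by omega
    exact huv (hG.dist_eq_zero_iff.mp this)
  obtain ⟨y, hy, h1⟩ := exists_further_single hG hcut huw
  have hwS' : G.dist u w = G.dist u v + G.dist v w := hwS
  have htri : G.dist u y ≤ G.dist u v + G.dist v y := hG.dist_triangle
  have htri2 : G.dist v y ≤ G.dist v w + G.dist w y := hG.dist_triangle
  have hy0 : 0 < G.dist w y := hG.pos_dist_of_ne (Ne.symm hy)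
  have hyS : y ∈ S := by simp only [hS, Set.mem_setOf_eq]; omega
  have := hmax (j := y) hyS (by beta_reduce; omega)
  simp only at this
  omega

lemma exists_noncut_behind_pair [Fintype V] (hG : G.Connected) {a b v : V} (hab : G.Adj a b)
    (hav : a ≠ v) (hbv : b ≠ v) :
    ∃ w, ¬ IsCutVertex G w ∧ G.dist a w = G.dist a v + G.dist v w ∧
      G.dist b w = G.dist b v + G.dist v w := by
  classical
  set S : Set V := {w | G.dist a w = G.dist a v + G.dist v w ∧
      G.dist b w = G.dist b v + G.dist v w} with hS
  have hvS : v ∈ S := by simp [hS, dist_self]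
  obtain ⟨w, hwS, hmax⟩ := Set.Finite.exists_maximalFor (fun w => G.dist v w) S (Set.toFinite S) ⟨v, hvS⟩
  obtain ⟨hw1, hw2⟩ := hwS
  refine ⟨w, fun hcut => ?_, hw1, hw2⟩
  have haw : a ≠ w := by
    rintro rfl
    have h0 : G.dist a a = 0 := dist_self
    have : G.dist a v = 0 := by omega
    exact hav (hG.dist_eq_zero_iff.mp this)
  have hbw : b ≠ w := by
    rintro rfl
    have h0 : G.dist b b = 0 := dist_self
    have : G.dist b v = 0 := by omega
    exact hbv (hG.dist_eq_zero_iff.mp this)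
  obtain ⟨y, hy, h1, h2⟩ := exists_further_pair hG hcut hab haw hbw
  have htri : G.dist a y ≤ G.dist a v + G.dist v y := hG.dist_triangle
  have htri2 : G.dist v y ≤ G.dist v w + G.dist w y := hG.dist_triangle
  have hy0 : 0 < G.dist w y := hG.pos_dist_of_ne (Ne.symm hy)
  have hvy : G.dist v y = G.dist v w + G.dist w y := by omega
  have htri3 : G.dist b y ≤ G.dist b v + G.dist v y := hG.dist_triangle
  have hyS : y ∈ S := by
    simp only [hS, Set.mem_setOf_eq]
    omega
  have := hmax (j := y) hyS (by beta_reduce; omega)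
  simp only at this
  omega


lemma upper_vertex_edge [Fintype V] (hG : G.Connected) {v a b : V} (hab : G.Adj a b) :
    ∃ w, ¬ IsCutVertex G w ∧ G.dist v w ≠ min (G.dist a w) (G.dist b w) := by
  have hone : G.dist a b = 1 := by
    refine le_antisymm (dist_le (Walk.cons hab Walk.nil)) (hG.pos_dist_of_ne hab.ne)
  by_cases hva : v = a
  · subst hva
    obtain ⟨w, hw, h1⟩ := exists_noncut_behind hG hab.ne
    refine ⟨w, hw, ?_⟩
    have : min (G.dist v w) (G.dist b w) = G.dist b w := min_eq_right (by omega)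
    omega
  · by_cases hvb : v = b
    · subst hvb
      obtain ⟨w, hw, h1⟩ := exists_noncut_behind hG hab.symm.ne
      have hone' : G.dist v a = 1 := by rwa [SimpleGraph.dist_comm] at hone
      refine ⟨w, hw, ?_⟩
      have : min (G.dist a w) (G.dist v w) = G.dist a w := min_eq_left (by omega)
      omega
    · by_cases hcut : IsCutVertex G v
      · obtain ⟨w, hw, h1, h2⟩ := exists_noncut_behind_pair hG hab
          (fun h => hva h.symm) (fun h => hvb h.symm)
        refine ⟨w, hw, ?_⟩
        have hpa : 0 < G.dist a v := hG.pos_dist_of_ne (fun h => hva h.symm)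
        have hpb : 0 < G.dist b v := hG.pos_dist_of_ne (fun h => hvb h.symm)
        have : G.dist v w + 1 ≤ min (G.dist a w) (G.dist b w) :=
          le_min (by omega) (by omega)
        omega
      · refine ⟨v, hcut, ?_⟩
        have hpa : 0 < G.dist a v := hG.pos_dist_of_ne (fun h => hva h.symm)
        have hpb : 0 < G.dist b v := hG.pos_dist_of_ne (fun h => hvb h.symm)
        have h0 : G.dist v v = 0 := dist_self
        have : 1 ≤ min (G.dist a v) (G.dist b v) := le_min (by omega) (by omega)
        omega

lemma upper_edge_edge [Fintype V] (hG : G.Connected) {a b c d : V} (hab : G.Adj a b)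
    (hcd : G.Adj c d) (hca : c ≠ a) (hda : d ≠ a) :
    ∃ w, ¬ IsCutVertex G w ∧
      min (G.dist a w) (G.dist b w) ≠ min (G.dist c w) (G.dist d w) := by
  by_cases hcut : IsCutVertex G a
  · obtain ⟨w, hw, h1, h2⟩ := exists_noncut_behind_pair hG hcd hca hda
    refine ⟨w, hw, ?_⟩
    have hpc : 0 < G.dist c a := hG.pos_dist_of_ne hca
    have hpd : 0 < G.dist d a := hG.pos_dist_of_ne hda
    have hlo : G.dist a w + 1 ≤ min (G.dist c w) (G.dist d w) :=
      le_min (by omega) (by omega)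
    have hhi : min (G.dist a w) (G.dist b w) ≤ G.dist a w := min_le_left _ _
    omega
  · refine ⟨a, hcut, ?_⟩
    have h0 : G.dist a a = 0 := dist_self
    have hhi : min (G.dist a a) (G.dist b a) = 0 := by omega
    have hpc : 0 < G.dist c a := hG.pos_dist_of_ne hca
    have hpd : 0 < G.dist d a := hG.pos_dist_of_ne hda
    have hlo : 1 ≤ min (G.dist c a) (G.dist d a) := le_min (by omega) (by omega)
    omega

lemma mixedDist_inl (w v : V) : mixedDist G w (Sum.inl v) = G.dist v w := rfl

lemma mixedDist_inr (w : V) (e : G.edgeSet) {a b : V} (h : e.val = s(a,b)) :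
    mixedDist G w (Sum.inr e) = min (G.dist a w) (G.dist b w) := by
  simp [mixedDist, edgeVertexDist, h]

lemma upper_resolving [Fintype V] (hG : G.Connected) :
    IsMixedResolving G {v | ¬ IsCutVertex G v} := by
  have vv : ∀ u v : V, u ≠ v → ∃ w, ¬IsCutVertex G w ∧ G.dist u w ≠ G.dist v w := by
    intro u v huv
    obtain ⟨w, hw, h1⟩ := exists_noncut_behind hG huv
    have : 0 < G.dist u v := hG.pos_dist_of_ne huv
    exact ⟨w, hw, by omega⟩
  have ve : ∀ (v : V) (e : G.edgeSet),
      ∃ w, ¬IsCutVertex G w ∧ mixedDist G w (Sum.inl v) ≠ mixedDist G w (Sum.inr e) := by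
    rintro v ⟨e, he⟩
    induction e using Sym2.ind with
    | _ a b =>
      have hadj : G.Adj a b := he
      obtain ⟨w, hw, h⟩ := upper_vertex_edge (v := v) hG hadj
      exact ⟨w, hw, by rw [mixedDist_inl, mixedDist_inr w _ rfl]; exact h⟩
  have ee : ∀ (e f : G.edgeSet), e ≠ f →
      ∃ w, ¬IsCutVertex G w ∧ mixedDist G w (Sum.inr e) ≠ mixedDist G w (Sum.inr f) := by
    rintro ⟨e, he⟩ ⟨f, hf⟩ hef
    have hef' : e ≠ f := fun h => hef (Subtype.ext h)
    clear hef
    induction e using Sym2.ind with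
    | _ a b =>
    induction f using Sym2.ind with
    | _ c d =>
      have hab : G.Adj a b := he
      have hcd : G.Adj c d := hf
      have hne : a ≠ b := hab.ne
      have hnoteq : ¬((a = c ∧ b = d) ∨ (a = d ∧ b = c)) := by
        rw [← Sym2.eq_iff]; exact hef'
      have hcases : (c ≠ a ∧ d ≠ a) ∨ (c ≠ b ∧ d ≠ b) := by
        by_cases hca' : c = a
        · refine Or.inr ⟨?_, fun hdb => hnoteq (Or.inl ⟨hca'.symm, hdb.symm⟩)⟩
          rw [hca']; exact hne
        · by_cases hda' : d = a
          · refine Or.inr ⟨fun hcb => hnoteq (Or.inr ⟨hda'.symm, hcb.symm⟩), ?_⟩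
            rw [hda']; exact hne
          · exact Or.inl ⟨hca', hda'⟩
      rcases hcases with ⟨h1, h2⟩ | ⟨h1, h2⟩
      · obtain ⟨w, hw, h⟩ := upper_edge_edge hG hab hcd h1 h2
        exact ⟨w, hw, by rw [mixedDist_inr w _ rfl, mixedDist_inr w _ rfl]; exact h⟩
      · obtain ⟨w, hw, h⟩ := upper_edge_edge hG hab.symm hcd h1 h2
        refine ⟨w, hw, ?_⟩
        rw [mixedDist_inr w _ rfl, mixedDist_inr w _ rfl, min_comm (G.dist a w)]
        exact h
  intro x y hxy
  match x, y with
  | Sum.inl u, Sum.inl v =>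
    obtain ⟨w, hw, h⟩ := vv u v (by simpa using hxy)
    exact ⟨w, hw, h⟩
  | Sum.inl v, Sum.inr e =>
    obtain ⟨w, hw, h⟩ := ve v e
    exact ⟨w, hw, h⟩
  | Sum.inr e, Sum.inl v =>
    obtain ⟨w, hw, h⟩ := ve v e
    exact ⟨w, hw, h.symm⟩
  | Sum.inr e, Sum.inr f =>
    obtain ⟨w, hw, h⟩ := ee e f (by simpa using hxy)
    exact ⟨w, hw, h⟩

lemma dist_le_of_maxnbr (hG : G.Connected) {x y : V} (hxy : G.Adj x y)
    (hmax : ∀ z, G.Adj x z → z ≠ y → G.Adj y z) {w : V} (hw : w ≠ x) :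
    G.dist y w ≤ G.dist x w := by
  have hpos : 0 < G.dist x w := hG.pos_dist_of_ne (fun h => hw h.symm)
  obtain ⟨p, hp⟩ := hG.exists_walk_length_eq_dist x w
  cases p with
  | nil => rw [Walk.length_nil] at hp; omega
  | cons h q =>
    rename_i z
    have hq : G.dist z w ≤ q.length := dist_le q
    rw [Walk.length_cons] at hp
    by_cases hzy : z = y
    · subst hzy; omega
    · have hyz : G.Adj y z := hmax z h hzy
      have h1 : G.dist y z ≤ 1 := by simpa using dist_le (Walk.cons hyz Walk.nil)
      have h2 : G.dist y w ≤ G.dist y z + G.dist z w := hG.dist_triangle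
      omega

lemma mem_of_resolving (hG : G.Connected) {W : Set V} (hW : IsMixedResolving G W) {x y : V}
    (hxy : G.Adj x y) (hmax : ∀ z, G.Adj x z → z ≠ y → G.Adj y z) : x ∈ W := by
  have he : s(x, y) ∈ G.edgeSet := hxy
  obtain ⟨w, hwW, hne⟩ := hW (Sum.inr ⟨s(x, y), he⟩) (Sum.inl y) (by simp)
  have hwx : w = x := by
    by_contra h
    apply hne
    rw [mixedDist_inr w _ rfl, mixedDist_inl]
    exact min_eq_right (dist_le_of_maxnbr hG hxy hmax h)
  exact hwx ▸ hwW

lemma end_not_mem_takeUntil [DecidableEq V] {a x y : V} {p : G.Walk a x} (hp : p.IsPath)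
    (hy : y ∈ p.support) (hyx : y ≠ x) : x ∉ (p.takeUntil y hy).support := by
  intro hx
  have hnd : ((p.takeUntil y hy).append (p.dropUntil y hy)).support.Nodup := by
    rw [p.take_spec hy]; exact hp.support_nodup
  rw [Walk.support_append] at hnd
  have hx2 : x ∈ (p.dropUntil y hy).support.tail := by
    have hxe : x ∈ (p.dropUntil y hy).support := Walk.end_mem_support _
    rw [Walk.support_eq_cons] at hxe
    exact (List.mem_cons.mp hxe).resolve_left (fun h => hyx h.symm)
  exact List.disjoint_of_nodup_append hnd hx hx2

lemma start_not_mem_dropUntil [DecidableEq V] {x b y : V} {p : G.Walk x b} (hp : p.IsPath)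
    (hy : y ∈ p.support) (hyx : y ≠ x) : x ∉ (p.dropUntil y hy).support := by
  intro hx
  have hnd : ((p.takeUntil y hy).append (p.dropUntil y hy)).support.Nodup := by
    rw [p.take_spec hy]; exact hp.support_nodup
  rw [Walk.support_append] at hnd
  have hx1 : x ∈ (p.takeUntil y hy).support := Walk.start_mem_support _
  have hx2 : x ∈ (p.dropUntil y hy).support.tail := by
    have hxe := hx
    rw [Walk.support_eq_cons] at hxe
    exact (List.mem_cons.mp hxe).resolve_left (fun h => hyx h.symm)
  exact List.disjoint_of_nodup_append hnd hx1 hx2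

lemma induce_singleton_connected (G : SimpleGraph V) (v : V) : (G.induce {v}).Connected := by
  rw [connected_iff_exists_forall_reachable]
  refine ⟨⟨v, rfl⟩, fun w => ?_⟩
  have : w = ⟨v, rfl⟩ := Subtype.ext w.2
  rw [this]

lemma noncut_simplicial [Fintype V] (hG : G.Connected) (hB : IsBlockGraph G) {v : V}
    (hv : ¬ IsCutVertex G v) {a b : V} (hva : G.Adj v a) (hvb : G.Adj v b) (hne : a ≠ b) :
    G.Adj a b := by
  classical
  by_contra hab
  have hconn : (G.induce {w | w ≠ v}).Connected := not_not.mp hv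
  have ha : a ≠ v := hva.ne'
  have hb : b ≠ v := hvb.ne'
  obtain ⟨p0⟩ := hconn ⟨a, ha⟩ ⟨b, hb⟩
  have hp1path : p0.bypass.IsPath := p0.bypass_isPath
  set pG : G.Walk a b := p0.bypass.map (inducedHom G _) with hpG
  have hpGpath : pG.IsPath :=
    Walk.map_isPath_of_injective Subtype.val_injective hp1path
  have hvsupp : v ∉ pG.support := by
    rw [show pG.support = p0.bypass.support.map (inducedHom G _) from Walk.support_map _ _]
    intro hmem
    obtain ⟨z, hz, hzv⟩ := List.mem_map.mp hmem
    exact z.2 hzv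
  set s : Set V := {v} ∪ {x | x ∈ pG.support} with hs
  have hvs : v ∈ s := Or.inl rfl
  have has : a ∈ s := Or.inr pG.start_mem_support
  have hbs : b ∈ s := Or.inr pG.end_mem_support
  have hsc : (G.induce s).Connected :=
    connected_induce_union (induce_singleton_connected G v).preconnected
      pG.connected_induce_support.preconnected rfl pG.start_mem_support hva
  have hrem : ∀ x ∈ s, (G.induce (s \ {x})).Connected := by
    intro x hxs
    rcases hxs with hxv | hxsupp
    · rw [Set.mem_singleton_iff] at hxv; subst hxv
      have hseq : s \ {x} = {z | z ∈ pG.support} := by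
        ext z
        constructor
        · rintro ⟨hz1, hz2⟩
          exact hz1.resolve_left hz2
        · intro hz
          exact ⟨Or.inr hz, fun h => hvsupp ((Set.mem_singleton_iff.mp h) ▸ hz)⟩
      rw [hseq]
      exact pG.connected_induce_support
    · simp only [Set.mem_setOf_eq] at hxsupp
      have hxv : x ≠ v := fun h => hvsupp (h ▸ hxsupp)
      have hvs' : v ∈ s \ {x} := ⟨hvs, fun h => hxv (Set.mem_singleton_iff.mp h).symm⟩
      apply G.induce_connected_of_patches v hvs'
      intro z hz
      refine ⟨s \ {x}, le_refl _, hvs', hz, ?_⟩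
      by_cases hzv : z = v
      · subst hzv; exact Reachable.refl _
      · have hznx : z ≠ x := fun h => hz.2 (Set.mem_singleton_iff.mpr h)
        have hzsupp : z ∈ pG.support := by
          rcases hz.1 with h | h
          · exact absurd (Set.mem_singleton_iff.mp h) hzv
          · exact h
        have hzP : z ∈ (pG.takeUntil x hxsupp).support ∨
            z ∈ (pG.dropUntil x hxsupp).support := by
          have hsp := pG.take_spec hxsupp
          rw [← hsp] at hzsupp
          exact (Walk.mem_support_append_iff _ _).mp hzsupp
        rcases hzP with hz1 | hz2
        · have hP1path : (pG.takeUntil x hxsupp).IsPath := hpGpath.takeUntil hxsupp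
          have hxnot : x ∉ ((pG.takeUntil x hxsupp).takeUntil z hz1).support :=
            end_not_mem_takeUntil hP1path hz1 hznx
          have hax : a ≠ x := by
            intro h; subst h
            have hnil : pG.takeUntil a hxsupp = Walk.nil :=
              Walk.isPath_iff_eq_nil.mp hP1path
            rw [hnil] at hz1
            simp only [Walk.support_nil, List.mem_singleton] at hz1
            exact hznx hz1
          have hsub : ∀ u ∈ (((pG.takeUntil x hxsupp).takeUntil z hz1).reverse.append
              (Walk.cons hva.symm Walk.nil)).support, u ∈ s \ {x} := by
            intro u hu
            rw [Walk.mem_support_append_iff] at hu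
            rcases hu with hu | hu
            · rw [Walk.support_reverse, List.mem_reverse] at hu
              have hus : u ∈ pG.support :=
                (pG.support_takeUntil_subset hxsupp)
                  (((pG.takeUntil x hxsupp).support_takeUntil_subset hz1) hu)
              exact ⟨Or.inr hus, fun h => hxnot ((Set.mem_singleton_iff.mp h) ▸ hu)⟩
            · simp only [Walk.support_cons, Walk.support_nil, List.mem_cons,
                List.mem_singleton, List.not_mem_nil, or_false] at hu
              rcases hu with rfl | rfl
              · exact ⟨has, fun h => hax (Set.mem_singleton_iff.mp h)⟩
              · exact ⟨hvs, fun h => hxv (Set.mem_singleton_iff.mp h).symm⟩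
          exact (reachable_induce_of_walk _ hsub).symm
        · have hP2path : (pG.dropUntil x hxsupp).IsPath := hpGpath.dropUntil hxsupp
          have hxnot : x ∉ ((pG.dropUntil x hxsupp).dropUntil z hz2).support :=
            start_not_mem_dropUntil hP2path hz2 hznx
          have hbx : b ≠ x := by
            intro h; subst h
            have hnil : pG.dropUntil b hxsupp = Walk.nil :=
              Walk.isPath_iff_eq_nil.mp hP2path
            rw [hnil] at hz2
            simp only [Walk.support_nil, List.mem_singleton] at hz2
            exact hznx hz2
          have hsub : ∀ u ∈ (((pG.dropUntil x hxsupp).dropUntil z hz2).append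
              (Walk.cons hvb.symm Walk.nil)).support, u ∈ s \ {x} := by
            intro u hu
            rw [Walk.mem_support_append_iff] at hu
            rcases hu with hu | hu
            · have hus : u ∈ pG.support :=
                (pG.support_dropUntil_subset hxsupp)
                  (((pG.dropUntil x hxsupp).support_dropUntil_subset hz2) hu)
              exact ⟨Or.inr hus, fun h => hxnot ((Set.mem_singleton_iff.mp h) ▸ hu)⟩
            · simp only [Walk.support_cons, Walk.support_nil, List.mem_cons,
                List.mem_singleton, List.not_mem_nil, or_false] at hu
              rcases hu with rfl | rfl
              · exact ⟨hbs, fun h => hbx (Set.mem_singleton_iff.mp h)⟩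
              · exact ⟨hvs, fun h => hxv (Set.mem_singleton_iff.mp h).symm⟩
          exact (reachable_induce_of_walk _ hsub).symm
  have hns : IsNonseparable G s := ⟨hsc, fun x hx => Or.inr (hrem x hx)⟩
  obtain ⟨t, ⟨hst, hnst⟩, hmax⟩ :=
    Set.Finite.exists_maximalFor id _ (Set.toFinite {t : Set V | s ⊆ t ∧ IsNonseparable G t})
      ⟨s, subset_refl s, hns⟩
  have hblock : IsBlock G t := ⟨hnst, fun t' ht' hns' =>
    Set.Subset.antisymm (hmax (j := t') ⟨hst.trans ht', hns'⟩ ht') ht'⟩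
  exact hab (hB t hblock (hst has) (hst hbs) hne)

end Helpers

/-- A connected block graph satisfies `mdim G = |V(G)| - ζ(G)`. -/
theorem stmt_15 [Fintype V] (G : SimpleGraph V) (hG : G.Connected)
    (hB : IsBlockGraph G) :
    mdim G = Fintype.card V - {v : V | IsCutVertex G v}.ncard := by
  classical
  set N : Set V := {v | ¬ IsCutVertex G v} with hN
  have hcompl : {v : V | IsCutVertex G v} = Nᶜ := by ext v; simp [hN]
  have hcard : N.ncard + Nᶜ.ncard = Fintype.card V := by
    rw [Set.ncard_add_ncard_compl N, Nat.card_eq_fintype_card]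
  have hle : Nᶜ.ncard ≤ Fintype.card V := by omega
  suffices h : mdim G = N.ncard by
    rw [h, hcompl]; omega
  have hmem : N.ncard ∈ {n | ∃ W : Finset V, W.card = n ∧ IsMixedResolving G ↑W} := by
    refine ⟨N.toFinset, by rw [Set.ncard_eq_toFinset_card'], ?_⟩
    rw [Set.coe_toFinset]
    exact upper_resolving hG
  refine le_antisymm (Nat.sInf_le hmem) (le_csInf ⟨_, hmem⟩ ?_)
  rintro n ⟨W, rfl, hW⟩
  have hsub : N ⊆ ↑W := by
    intro x hx
    have hx' : ¬ IsCutVertex G x := hx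
    have hnb : ∃ y, G.Adj x y := by
      by_contra hno
      push_neg at hno
      apply hx'
      intro hc
      obtain ⟨⟨w, hw⟩⟩ := hc.nonempty
      obtain ⟨p⟩ := hG x w
      cases p with
      | nil => exact hw rfl
      | cons h q => exact hno _ h
    obtain ⟨y, hxy⟩ := hnb
    have hmax : ∀ z, G.Adj x z → z ≠ y → G.Adj y z := fun z hz hzy =>
      noncut_simplicial hG hB hx' hxy hz (Ne.symm hzy)
    exact mem_of_resolving hG hW hxy hmax
  have hfin : N.ncard ≤ (↑W : Set V).ncard := Set.ncard_le_ncard hsub W.finite_toSet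
  rwa [Set.ncard_coe_finset] at hfin
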